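/- arXiv:1204.5323 — 2 statements merged into one kernel-verified Lean document; each statement's English description precedes it below -/
import Mathlib

section
/- There exists a constant C > 0 such that for every ε > 0 and all continuously differentiable compactly supported functions f, g : ℝ³ → ℝ and every h ∈ L²(ℝ³), |∫_{ℝ³} f·g·h dx| ≤ ε ‖∇f‖_{L²}² + (C/ε) (‖g‖_{L²}² + ‖∇g‖_{L²}²) ‖h‖_{L²}². -/
open MeasureTheory Real
open scoped ENNReal NNReal

private lemma dnt {a b : ℝ≥0∞} (ha : a ≠ ⊤) (hb : b ≠ 0) : a / b ≠ ⊤ :=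
  (ENNReal.div_lt_top ha hb).ne

private lemma arith1 : (1:ℝ≥0∞)/1 = 1/6 + 1/(6/5) := by
  have h1 : (1:ℝ≥0∞)/6 ≠ ⊤ := dnt ENNReal.one_ne_top (by norm_num)
  have h2 : (1:ℝ≥0∞)/(6/5) ≠ ⊤ := dnt ENNReal.one_ne_top (by simp [ENNReal.div_eq_zero_iff])
  rw [← ENNReal.toReal_eq_toReal_iff' (dnt ENNReal.one_ne_top one_ne_zero) (ENNReal.add_ne_top.mpr ⟨h1, h2⟩),
    ENNReal.toReal_add h1 h2]
  simp [ENNReal.toReal_div]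
  norm_num

private lemma arith2 : (1:ℝ≥0∞)/(6/5) = 1/3 + 1/2 := by
  have h1 : (1:ℝ≥0∞)/3 ≠ ⊤ := dnt ENNReal.one_ne_top (by norm_num)
  have h2 : (1:ℝ≥0∞)/2 ≠ ⊤ := dnt ENNReal.one_ne_top (by norm_num)
  rw [← ENNReal.toReal_eq_toReal_iff' (dnt ENNReal.one_ne_top (by simp [ENNReal.div_eq_zero_iff]))
    (ENNReal.add_ne_top.mpr ⟨h1, h2⟩), ENNReal.toReal_add h1 h2]
  simp [ENNReal.toReal_div]
  norm_num

private lemma arith3 : (1:ℝ≥0∞)/3 = 1/4 + 1/12 := by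
  have h1 : (1:ℝ≥0∞)/4 ≠ ⊤ := dnt ENNReal.one_ne_top (by norm_num)
  have h2 : (1:ℝ≥0∞)/12 ≠ ⊤ := dnt ENNReal.one_ne_top (by norm_num)
  rw [← ENNReal.toReal_eq_toReal_iff' (dnt ENNReal.one_ne_top (by norm_num))
    (ENNReal.add_ne_top.mpr ⟨h1, h2⟩), ENNReal.toReal_add h1 h2]
  simp [ENNReal.toReal_div]
  norm_num

private lemma arith4 : (4:ℝ≥0∞) * ENNReal.ofReal (1/2) = 2 := by
  rw [← ENNReal.toReal_eq_toReal_iff' (ENNReal.mul_ne_top (by norm_num) ENNReal.ofReal_ne_top) (by norm_num)]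
  simp [ENNReal.toReal_mul, ENNReal.toReal_ofReal]
  norm_num

private lemma arith5 : (12:ℝ≥0∞) * ENNReal.ofReal (1/2) = 6 := by
  rw [← ENNReal.toReal_eq_toReal_iff' (ENNReal.mul_ne_top (by norm_num) ENNReal.ofReal_ne_top) (by norm_num)]
  simp [ENNReal.toReal_mul, ENNReal.toReal_ofReal]
  norm_num

/-- Sobolev inequality on `ℝ³`: `‖u‖₆ ≤ S ‖∇u‖₂`. -/
private lemma sobolev6 (u : EuclideanSpace ℝ (Fin 3) → ℝ) (hu : ContDiff ℝ 1 u)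
    (h2u : HasCompactSupport u) :
    eLpNorm u 6 volume ≤
      eLpNormLESNormFDerivOfEqInnerConst (volume : Measure (EuclideanSpace ℝ (Fin 3))) 2
        * eLpNorm (fderiv ℝ u) 2 volume := by
  have := eLpNorm_le_eLpNorm_fderiv_of_eq_inner (volume : Measure (EuclideanSpace ℝ (Fin 3))) hu h2u
    (p := 2) (p' := 6) (by norm_num) (by simp) (by simp; norm_num)
  convert this using 2 <;> norm_num

/-- Interpolation: `‖g‖₃ ≤ ‖g‖₂^{1/2} ‖g‖₆^{1/2}`. -/
private lemma interp3 {α : Type*} [MeasurableSpace α] [TopologicalSpace α] [OpensMeasurableSpace α] {μ : Measure α} (g : α → ℝ)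
    (hg : Continuous g) :
    eLpNorm g 3 μ ≤ (eLpNorm g 2 μ) ^ ((1:ℝ)/2) * (eLpNorm g 6 μ) ^ ((1:ℝ)/2) := by
  set w : α → ℝ := fun x => ‖g x‖ ^ ((1:ℝ)/2) with hw
  have hwc : Continuous w := hg.norm.rpow_const (fun x => Or.inr (by norm_num))
  have key : eLpNorm g 3 μ = eLpNorm (fun x => w x * w x) 3 μ := by
    rw [← eLpNorm_norm g]
    apply eLpNorm_congr_ae
    filter_upwards with x
    rw [hw]
    rw [← Real.rpow_add' (norm_nonneg _) (by norm_num : (1:ℝ)/2 + 1/2 ≠ 0)]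
    norm_num
  rw [key]
  have holder := eLpNorm_le_eLpNorm_mul_eLpNorm'_of_norm (μ := μ) (p := 4) (q := 12) (r := 3)
    hwc.aestronglyMeasurable hwc.aestronglyMeasurable (fun a b => a * b) 1
    (Filter.Eventually.of_forall fun x => by simp [norm_mul])
    (hpqr := ⟨by simpa only [one_div] using arith3.symm⟩)
  rw [ENNReal.coe_one, one_mul] at holder
  refine holder.trans ?_
  have e4 : eLpNorm w 4 μ = (eLpNorm g 2 μ) ^ ((1:ℝ)/2) := by
    rw [hw]
    rw [eLpNorm_norm_rpow g (by norm_num : (0:ℝ) < 1/2), arith4]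
  have e12 : eLpNorm w 12 μ = (eLpNorm g 6 μ) ^ ((1:ℝ)/2) := by
    rw [hw]
    rw [eLpNorm_norm_rpow g (by norm_num : (0:ℝ) < 1/2), arith5]
  rw [e4, e12]

set_option maxHeartbeats 1000000 in
/-- Trilinear estimate: there is `C > 0` such that for every `ε > 0`,
all `C¹` compactly supported `f, g : ℝ³ → ℝ` and every `h ∈ L²(ℝ³)`,
`|∫ f g h| ≤ ε ‖∇f‖₂² + (C/ε)(‖g‖₂² + ‖∇g‖₂²)‖h‖₂²`. -/
theorem trilinear_estimate_one :
    ∃ C > (0:ℝ), ∀ ε : ℝ, 0 < ε →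
      ∀ f g : EuclideanSpace ℝ (Fin 3) → ℝ,
        ContDiff ℝ 1 f → HasCompactSupport f →
        ContDiff ℝ 1 g → HasCompactSupport g →
        ∀ h : EuclideanSpace ℝ (Fin 3) → ℝ, MemLp h 2 volume →
          |∫ x, f x * g x * h x| ≤
            ε * (eLpNorm (fun y => ‖fderiv ℝ f y‖) 2 volume).toReal ^ 2
              + C / ε * ((eLpNorm g 2 volume).toReal ^ 2
                  + (eLpNorm (fun y => ‖fderiv ℝ g y‖) 2 volume).toReal ^ 2)
                * (eLpNorm h 2 volume).toReal ^ 2 := by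
  set S : ℝ≥0 :=
    eLpNormLESNormFDerivOfEqInnerConst (volume : Measure (EuclideanSpace ℝ (Fin 3))) 2 with hS
  refine ⟨(S:ℝ)^3/8 + 1, by positivity, ?_⟩
  intro ε hε f g hf hf2 hg hg2 h hh
  -- abbreviations
  set A := eLpNorm (fderiv ℝ f) 2 volume with hA
  set B := eLpNorm g 2 volume with hB
  set D := eLpNorm (fderiv ℝ g) 2 volume with hD
  set H := eLpNorm h 2 volume with hH
  have hfc : Continuous f := hf.continuous
  have hgc : Continuous g := hg.continuous
  have hfd : Continuous (fderiv ℝ f) := hf.continuous_fderiv one_ne_zero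
  have hgd : Continuous (fderiv ℝ g) := hg.continuous_fderiv one_ne_zero
  have hAne : A ≠ ⊤ := (hfd.memLp_of_hasCompactSupport (μ := volume) (hf2.fderiv (𝕜 := ℝ))).eLpNorm_lt_top.ne
  have hBne : B ≠ ⊤ := (hgc.memLp_of_hasCompactSupport (μ := volume) hg2).eLpNorm_lt_top.ne
  have hDne : D ≠ ⊤ := (hgd.memLp_of_hasCompactSupport (μ := volume) (hg2.fderiv (𝕜 := ℝ))).eLpNorm_lt_top.ne
  have hHne : H ≠ ⊤ := hh.eLpNorm_lt_top.ne
  -- step 1: |∫ fgh| ≤ ‖fgh‖₁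
  have step1 : |∫ x, f x * g x * h x| ≤
      (eLpNorm (fun x => f x * g x * h x) 1 volume).toReal := by
    rw [eLpNorm_one_eq_lintegral_enorm]
    have := norm_integral_le_lintegral_norm (μ := volume) (f := fun x => f x * g x * h x)
    rw [Real.norm_eq_abs] at this
    refine this.trans (le_of_eq ?_)
    congr 1
    apply lintegral_congr
    intro x
    rw [ofReal_norm]
  -- step 2: Hölder ‖fgh‖₁ ≤ ‖f‖₆ ‖gh‖_{6/5}
  have hghm : AEStronglyMeasurable (fun x => g x * h x) volume :=
    hgc.aestronglyMeasurable.mul hh.1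
  have step2 : eLpNorm (fun x => f x * g x * h x) 1 volume ≤
      eLpNorm f 6 volume * eLpNorm (fun x => g x * h x) (6/5) volume := by
    have := eLpNorm_le_eLpNorm_mul_eLpNorm'_of_norm (p := 6) (q := 6/5) (r := 1)
      hfc.aestronglyMeasurable hghm (fun a b => a * b) 1
      (Filter.Eventually.of_forall fun x => by simp [norm_mul])
      (hpqr := ⟨by simpa only [one_div] using arith1.symm⟩)
    rw [ENNReal.coe_one, one_mul] at this
    refine le_trans (le_of_eq ?_) this
    apply eLpNorm_congr_ae
    filter_upwards with x
    ring
  -- step 3: Hölder ‖gh‖_{6/5} ≤ ‖g‖₃ ‖h‖₂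
  have step3 : eLpNorm (fun x => g x * h x) (6/5) volume ≤
      eLpNorm g 3 volume * H := by
    have := eLpNorm_le_eLpNorm_mul_eLpNorm'_of_norm (p := 3) (q := 2) (r := 6/5)
      hgc.aestronglyMeasurable hh.1 (fun a b => a * b) 1
      (Filter.Eventually.of_forall fun x => by simp [norm_mul])
      (hpqr := ⟨by simpa only [one_div] using arith2.symm⟩)
    rwa [ENNReal.coe_one, one_mul] at this
  -- step 4: interpolation and Sobolev
  have step4 : eLpNorm g 3 volume ≤ B ^ ((1:ℝ)/2) * ((S:ℝ≥0∞) * D) ^ ((1:ℝ)/2) := by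
    refine (interp3 g hgc).trans ?_
    gcongr
    exact sobolev6 g hg hg2
  have step5 : eLpNorm f 6 volume ≤ (S:ℝ≥0∞) * A := sobolev6 f hf hf2
  -- combine in ℝ≥0∞
  have combined : eLpNorm (fun x => f x * g x * h x) 1 volume ≤
      ((S:ℝ≥0∞) * A) * ((B ^ ((1:ℝ)/2) * ((S:ℝ≥0∞) * D) ^ ((1:ℝ)/2)) * H) := by
    refine step2.trans ?_
    refine mul_le_mul' step5 (step3.trans ?_)
    exact mul_le_mul' step4 le_rfl
  have hRne : ((S:ℝ≥0∞) * A) * ((B ^ ((1:ℝ)/2) * ((S:ℝ≥0∞) * D) ^ ((1:ℝ)/2)) * H) ≠ ⊤ := by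
    apply ENNReal.mul_ne_top (ENNReal.mul_ne_top ENNReal.coe_ne_top hAne)
    apply ENNReal.mul_ne_top _ hHne
    apply ENNReal.mul_ne_top
    · exact ENNReal.rpow_ne_top_of_nonneg (by norm_num) hBne
    · exact ENNReal.rpow_ne_top_of_nonneg (by norm_num)
        (ENNReal.mul_ne_top ENNReal.coe_ne_top hDne)
  -- pass to real numbers
  set a := A.toReal with ha
  set b := B.toReal with hb
  set d := D.toReal with hd
  set k := H.toReal with hk
  set s := (S:ℝ) with hs
  have hreal : |∫ x, f x * g x * h x| ≤
      s * a * (b ^ ((1:ℝ)/2) * (s * d) ^ ((1:ℝ)/2) * k) := by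
    refine step1.trans ?_
    have := ENNReal.toReal_mono hRne combined
    refine this.trans (le_of_eq ?_)
    simp only [ENNReal.toReal_mul, ← ENNReal.toReal_rpow, ENNReal.coe_toReal]
    rfl
  -- nonnegativity facts
  have ha0 : 0 ≤ a := ENNReal.toReal_nonneg
  have hb0 : 0 ≤ b := ENNReal.toReal_nonneg
  have hd0 : 0 ≤ d := ENNReal.toReal_nonneg
  have hk0 : 0 ≤ k := ENNReal.toReal_nonneg
  have hs0 : 0 ≤ s := S.coe_nonneg
  set x := b ^ ((1:ℝ)/2) with hx
  set y := (s * d) ^ ((1:ℝ)/2) with hy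
  have hx0 : 0 ≤ x := Real.rpow_nonneg hb0 _
  have hy0 : 0 ≤ y := Real.rpow_nonneg (by positivity) _
  have hx2 : x ^ 2 = b := by
    rw [hx, ← Real.rpow_natCast (b ^ ((1:ℝ)/2)) 2, ← Real.rpow_mul hb0]
    norm_num
  have hy2 : y ^ 2 = s * d := by
    rw [hy, ← Real.rpow_natCast ((s*d) ^ ((1:ℝ)/2)) 2, ← Real.rpow_mul (by positivity)]
    norm_num
  -- rewrite the goal norms
  have gnorm1 : (eLpNorm (fun y => ‖fderiv ℝ f y‖) 2 volume).toReal = a := by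
    rw [ha, hA, eLpNorm_norm]
  have gnorm2 : (eLpNorm (fun y => ‖fderiv ℝ g y‖) 2 volume).toReal = d := by
    rw [hd, hD, eLpNorm_norm]
  rw [gnorm1, gnorm2]
  -- final elementary computation
  set T := s * x * y * k with hT
  have hT0 : 0 ≤ T := by positivity
  have young : s * a * (x * y * k) ≤ ε * a ^ 2 + T ^ 2 / (4 * ε) := by
    have h4ε : (0:ℝ) < 4 * ε := by linarith
    have expand : ε * a ^ 2 + T ^ 2 / (4 * ε) - s * a * (x * y * k)
        = (2 * ε * a - T) ^ 2 / (4 * ε) := by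
      rw [hT]
      field_simp
      ring
    have hnn : 0 ≤ (2 * ε * a - T) ^ 2 / (4 * ε) := div_nonneg (sq_nonneg _) h4ε.le
    linarith [expand, hnn]
  have hT2 : T ^ 2 = s ^ 3 * (b * d) * k ^ 2 := by
    rw [hT]
    have : (s * x * y * k) ^ 2 = s^2 * x^2 * y^2 * k^2 := by ring
    rw [this, hx2, hy2]
    ring
  have hbd : b * d ≤ (b ^ 2 + d ^ 2) / 2 := by nlinarith [sq_nonneg (b - d)]
  have final : T ^ 2 / (4 * ε) ≤ (s ^ 3 / 8 + 1) / ε * (b ^ 2 + d ^ 2) * k ^ 2 := by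
    rw [hT2]
    rw [div_le_iff₀ (by linarith : (0:ℝ) < 4 * ε)]
    have h1 : (s ^ 3 / 8 + 1) / ε * (b ^ 2 + d ^ 2) * k ^ 2 * (4 * ε)
        = 4 * (s ^ 3 / 8 + 1) * (b ^ 2 + d ^ 2) * k ^ 2 := by
      field_simp
    rw [h1]
    nlinarith [mul_nonneg (pow_nonneg hs0 3) (mul_nonneg (sq_nonneg (b - d)) (sq_nonneg k)),
      mul_nonneg (add_nonneg (sq_nonneg b) (sq_nonneg d)) (sq_nonneg k)]
  calc |∫ x, f x * g x * h x| ≤ s * a * (x * y * k) := hreal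
    _ ≤ ε * a ^ 2 + T ^ 2 / (4 * ε) := young
    _ ≤ ε * a ^ 2 + (s ^ 3 / 8 + 1) / ε * (b ^ 2 + d ^ 2) * k ^ 2 := by linarith
end

section
/- Let p ∈ [1, 6/5), set σ = 3/(2p) − 1/4, and let C₂ > 0, C > 0, E₀ ≥ 0. There exist constants C₃ > 0 and δ₁ > 0 (depending only on p, C₂, C) such that the following holds for every δ ∈ (0, δ₁]. Suppose M : [0, ∞) → [0, ∞) is continuously differentiable and D, u : [0, ∞) → [0, ∞) are measurable functions satisfying: (i) M′(t) + D(t) ≤ C δ u(t)² for all t ≥ 0; (ii) C₂^{−1}(u(t)² + D(t)) ≤ M(t) ≤ C₂ (u(t)² + D(t)) for all t ≥ 0; and (iii) for every integer n ≥ 1 and integer l with 0 ≤ l ≤ 2nσ − 2, ∫₀ᵗ (1+s)^{l} u(s)^{2n} ds ≤ (C E₀)^{2n} + (C δ)^{2n} ∫₀ᵗ (1+s)^{l} D(s)^{n} ds for all t ≥ 0. Then for every integer n ≥ 1 and every integer l with 0 ≤ l ≤ 2nσ − 2 and all t ≥ 0: (1+t)^{l} M(t)^{n} + n ∫₀ᵗ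 (1+s)^{l} M(s)^{n−1} D(s) ds ≤ 2 M(0)^{n} + (C₃ E₀)^{2n} + 8 C₂ n σ ∫₀ᵗ (1+s)^{l−1} M(s)^{n−1} D(s) ds. -/
open MeasureTheory Real

lemma aux_pow_mul_le (n : ℕ) (hn : 1 ≤ n) {a b : ℝ} (ha : 0 ≤ a) (hb : 0 ≤ b) :
    a ^ (n-1) * b ≤ a ^ n + b ^ n := by
  rcases le_total b a with h | h
  · calc a ^ (n-1) * b ≤ a ^ (n-1) * a := by gcongr
    _ = a ^ n := by rw [← pow_succ, Nat.sub_add_cancel hn]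
    _ ≤ a ^ n + b ^ n := le_add_of_nonneg_right (by positivity)
  · calc a ^ (n-1) * b ≤ b ^ (n-1) * b := by gcongr
    _ = b ^ n := by rw [← pow_succ, Nat.sub_add_cancel hn]
    _ ≤ a ^ n + b ^ n := le_add_of_nonneg_left (by positivity)

lemma aux_key (C₂ : ℝ) (hC₂ : 0 < C₂) (n : ℕ) (hn : 1 ≤ n) {m d w : ℝ}
    (hm0 : 0 ≤ m) (hd : 0 ≤ d) (hw : 0 ≤ w)
    (h2 : m ≤ C₂ * (w + d)) :
    m ^ (n-1) * w ≤ m ^ (n-1) * d + 2 * (2*C₂) ^ (n-1) * w ^ n := by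
  have hA : m ^ (n-1) * (2*C₂*w) ≤ m ^ n + (2*C₂) ^ n * w ^ n := by
    have := aux_pow_mul_le n hn hm0 (show (0:ℝ) ≤ 2*C₂*w by positivity)
    calc m ^ (n-1) * (2*C₂*w) ≤ m ^ n + (2*C₂*w) ^ n := this
    _ = m ^ n + (2*C₂) ^ n * w ^ n := by rw [mul_pow]
  have hB : m ^ n ≤ m ^ (n-1) * (C₂ * (w + d)) := by
    calc m ^ n = m ^ (n-1) * m := by rw [← pow_succ, Nat.sub_add_cancel hn]
    _ ≤ m ^ (n-1) * (C₂ * (w + d)) := by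
        apply mul_le_mul_of_nonneg_left h2 (by positivity)
  have hpow : (2*C₂) ^ n = 2*C₂ * (2*C₂) ^ (n-1) := by
    rw [← pow_succ', Nat.sub_add_cancel hn]
  nlinarith [pow_nonneg hm0 (n-1), pow_nonneg hw n, sq_nonneg m]

lemma aux_Dn (C₂ : ℝ) (hC₂ : 0 < C₂) (n : ℕ) (hn : 1 ≤ n) {m d : ℝ}
    (hm0 : 0 ≤ m) (hd : 0 ≤ d) (h1 : d ≤ C₂ * m) :
    d ^ n ≤ C₂ ^ (n-1) * (m ^ (n-1) * d) := by
  calc d ^ n = d ^ (n-1) * d := by rw [← pow_succ, Nat.sub_add_cancel hn]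
  _ ≤ (C₂ * m) ^ (n-1) * d := by gcongr
  _ = C₂ ^ (n-1) * (m ^ (n-1) * d) := by rw [mul_pow]; ring

lemma aux_n_le (n : ℕ) : (n : ℝ) ≤ 4 ^ n := by
  calc (n:ℝ) ≤ 2 ^ n := by exact_mod_cast (Nat.lt_two_pow_self (n := n)).le
  _ ≤ 4 ^ n := by gcongr <;> norm_num

lemma aux_n_geo (n : ℕ) (hn : 1 ≤ n) : (n : ℝ) * (1/8) ^ (n-1) ≤ 2 := by
  have h1 : (n:ℝ) ≤ 2 * 2 ^ (n-1) := by
    calc (n:ℝ) ≤ 2 ^ n := by exact_mod_cast (Nat.lt_two_pow_self (n := n)).le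
    _ = 2 * 2 ^ (n-1) := by rw [← pow_succ', Nat.sub_add_cancel hn]
  have h2 : (0:ℝ) ≤ (1/8:ℝ) ^ (n-1) := by positivity
  calc (n:ℝ) * (1/8) ^ (n-1) ≤ (2 * 2 ^ (n-1)) * (1/8) ^ (n-1) := by
        exact mul_le_mul_of_nonneg_right h1 h2
  _ = 2 * (2 * (1/8)) ^ (n-1) := by rw [mul_pow]; ring
  _ ≤ 2 * 1 := by
      gcongr
      exact pow_le_one₀ (by norm_num) (by norm_num)
  _ = 2 := by norm_num

set_option maxHeartbeats 8000000 in
/-- Abstract form of Lemma 4.2: the weighted energy inequality with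
dissipation, deduced from the differential inequality (i), the equivalence (ii), and the
weighted higher-power estimate (iii). -/
theorem weighted_energy_estimate (p : ℝ) (hp1 : 1 ≤ p) (hp2 : p < 6/5)
    (C₂ C : ℝ) (hC₂ : 0 < C₂) (hC : 0 < C) :
    ∃ C₃ > (0:ℝ), ∃ δ₁ > (0:ℝ),
      ∀ E₀ : ℝ, 0 ≤ E₀ → ∀ δ : ℝ, 0 < δ → δ ≤ δ₁ →
      ∀ M D u : ℝ → ℝ,
        ContDiffOn ℝ 1 M (Set.Ici 0) → (∀ t : ℝ, 0 ≤ t → 0 ≤ M t) →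
        Measurable D → (∀ t : ℝ, 0 ≤ t → 0 ≤ D t) →
        Measurable u → (∀ t : ℝ, 0 ≤ t → 0 ≤ u t) →
        (∀ t : ℝ, 0 ≤ t → derivWithin M (Set.Ici 0) t + D t ≤ C * δ * u t ^ 2) →
        (∀ t : ℝ, 0 ≤ t →
          C₂⁻¹ * (u t ^ 2 + D t) ≤ M t ∧ M t ≤ C₂ * (u t ^ 2 + D t)) →
        (∀ n : ℕ, 1 ≤ n → ∀ l : ℕ, (l : ℝ) ≤ 2 * n * (3 / (2 * p) - 1 / 4) - 2 →
          ∀ t : ℝ, 0 ≤ t →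
            ∫ s in Set.Icc (0:ℝ) t, (1 + s) ^ (l : ℝ) * u s ^ (2 * n) ≤
              (C * E₀) ^ (2 * n)
                + (C * δ) ^ (2 * n) *
                    ∫ s in Set.Icc (0:ℝ) t, (1 + s) ^ (l : ℝ) * D s ^ n) →
        ∀ n : ℕ, 1 ≤ n → ∀ l : ℕ, (l : ℝ) ≤ 2 * n * (3 / (2 * p) - 1 / 4) - 2 →
        ∀ t : ℝ, 0 ≤ t →
          (1 + t) ^ (l : ℝ) * M t ^ n
            + n * ∫ s in Set.Icc (0:ℝ) t, (1 + s) ^ (l : ℝ) * M s ^ (n - 1) * D s ≤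
          2 * M 0 ^ n + (C₃ * E₀) ^ (2 * n)
            + 8 * C₂ * n * (3 / (2 * p) - 1 / 4) *
                ∫ s in Set.Icc (0:ℝ) t, (1 + s) ^ ((l : ℝ) - 1) * M s ^ (n - 1) * D s := by
  have hp0 : (0:ℝ) < p := by linarith
  set σ : ℝ := 3 / (2*p) - 1/4 with hσdef
  have hσ1 : 1 < σ := by
    have h1 : (5:ℝ)/4 * (2*p) < 3 := by nlinarith
    have h2 : (5:ℝ)/4 < 3 / (2*p) := (lt_div_iff₀ (by positivity)).mpr h1
    simp only [hσdef]; linarith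
  have hσ2 : σ ≤ 5/4 := by
    have h1 : 3 / (2*p) ≤ 3/2 := by
      rw [div_le_div_iff₀ (by positivity) (by norm_num)]; nlinarith
    simp only [hσdef]; linarith
  set B : ℝ := 6*(C₂+1)^2 with hBdef
  have hB1 : (1:ℝ) ≤ B := by nlinarith
  have h5B : 5*C₂+1 ≤ B := by rw [hBdef]; nlinarith
  have h6B : 2*C₂ ≤ B := by rw [hBdef]; nlinarith
  refine ⟨8*B*C, by positivity, 1/(4*C*(1+C₂)), by positivity, ?_⟩
  intro E₀ hE₀ δ hδ0 hδ1 M D u hM hM0 hD hD0 hu hu0 hi hii hiii n hn l hl t ht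
  -- basic numeric facts about δ
  have hkey : δ * (4*C*(1+C₂)) ≤ 1 := by
    rw [← le_div_iff₀ (by positivity)]; exact hδ1
  have hCδ0 : (0:ℝ) < C*δ := by positivity
  have hCδ4 : C*δ ≤ 1/4 := by nlinarith
  have hx14 : C*δ*(1+C₂) ≤ 1/4 := by nlinarith
  have hx2 : (C*δ*(1+C₂))^2 ≤ (1/4)^2 := by
    apply pow_le_pow_left₀ (by positivity) hx14
  have hx3 : C₂^2 ≤ (1+C₂)^2 := by nlinarith
  have hx4 : (C*δ)^2 * C₂^2 ≤ (C*δ)^2 * (1+C₂)^2 :=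
    mul_le_mul_of_nonneg_left hx3 (sq_nonneg (C*δ))
  have hCδsq : (C*δ)^2 * (2*C₂^2) ≤ 1/8 := by nlinarith [hx4, hx2]
  have hn1 : (1:ℝ) ≤ (n:ℝ) := by exact_mod_cast hn
  have hn0 : (0:ℝ) ≤ (n:ℝ) := by positivity
  have hl5 : (l:ℝ) ≤ 5/2 * (n:ℝ) := by
    have h := mul_le_mul_of_nonneg_left hσ2 (show (0:ℝ) ≤ 2*(n:ℝ) by positivity)
    calc (l:ℝ) ≤ 2*(n:ℝ)*σ - 2 := hl
    _ ≤ 2*(n:ℝ)*(5/4) - 2 := by rw [mul_assoc, mul_assoc] at h ⊢; linarith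
    _ ≤ 5/2 * (n:ℝ) := by linarith
  have hl2σ : (l:ℝ) ≤ 2*(n:ℝ)*σ - 2 := hl
  -- pointwise consequences of (ii)
  have hub : ∀ s : ℝ, 0 ≤ s → u s ^ 2 + D s ≤ C₂ * M s := by
    intro s hs
    have h := (hii s hs).1
    rwa [inv_mul_le_iff₀ hC₂] at h
  have hDle : ∀ s : ℝ, 0 ≤ s → D s ≤ C₂ * M s := fun s hs => by
    nlinarith [hub s hs, sq_nonneg (u s)]
  have hu2le : ∀ s : ℝ, 0 ≤ s → u s ^ 2 ≤ C₂ * M s := fun s hs => by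
    nlinarith [hub s hs, hD0 s hs]
  -- continuity and boundedness
  have hIccIci : Set.Icc (0:ℝ) t ⊆ Set.Ici 0 := Set.Icc_subset_Ici_self
  have hMcc : ContinuousOn M (Set.Icc 0 t) := hM.continuousOn.mono hIccIci
  have hM'cc : ContinuousOn (derivWithin M (Set.Ici 0)) (Set.Icc 0 t) :=
    (hM.continuousOn_derivWithin (uniqueDiffOn_Ici 0) le_rfl).mono hIccIci
  obtain ⟨B0, hB0⟩ := isCompact_Icc.exists_bound_of_continuousOn hMcc
  have hBM : ∀ s ∈ Set.Icc (0:ℝ) t, M s ≤ B0 := fun s hs => by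
    have := hB0 s hs; rw [Real.norm_eq_abs, abs_of_nonneg (hM0 s hs.1)] at this; exact this
  have hB0nn : 0 ≤ B0 := le_trans (norm_nonneg _) (hB0 0 ⟨le_refl _, ht⟩)
  -- integrability helper
  have hIntBd : ∀ (g : ℝ → ℝ) (Bg : ℝ), AEStronglyMeasurable g (volume.restrict (Set.Icc 0 t)) →
      (∀ s ∈ Set.Icc (0:ℝ) t, |g s| ≤ Bg) → IntegrableOn g (Set.Icc 0 t) := by
    intro g Bg hg hBg
    exact ⟨hg, HasFiniteIntegral.restrict_of_bounded (C := Bg) measure_Icc_lt_top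
      ((ae_restrict_iff' measurableSet_Icc).mpr (Filter.Eventually.of_forall
        (fun s hs => by simpa [Real.norm_eq_abs] using hBg s hs)))⟩
  have hMa : AEStronglyMeasurable M (volume.restrict (Set.Icc 0 t)) :=
    hMcc.aestronglyMeasurable measurableSet_Icc
  have hwa : ∀ k : ℕ, AEStronglyMeasurable (fun s : ℝ => (1+s)^k)
      (volume.restrict (Set.Icc 0 t)) := fun k =>
    ((continuous_const.add continuous_id).pow k).aestronglyMeasurable
  -- the three families of integrable functions
  have hintMD : ∀ k : ℕ, IntegrableOn (fun s => (1+s)^k * M s ^ (n-1) * D s)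
      (Set.Icc 0 t) := by
    intro k
    apply hIntBd _ ((1+t)^k * B0^(n-1) * (C₂*B0))
    · exact ((hwa k).mul (hMa.pow _)).mul hD.aestronglyMeasurable
    · intro s hs
      have h1s : (0:ℝ) ≤ 1 + s := by linarith [hs.1]
      have hm := hM0 s hs.1
      have hd := hD0 s hs.1
      rw [abs_of_nonneg (by positivity)]
      have hDb : D s ≤ C₂ * B0 := le_trans (hDle s hs.1)
        (mul_le_mul_of_nonneg_left (hBM s hs) hC₂.le)
      gcongr
      all_goals first
        | exact hs.2
        | exact hBM s hs
        | exact hDb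
        | positivity
  have hintU : ∀ k : ℕ, IntegrableOn (fun s => (1+s)^k * u s ^ (2*n))
      (Set.Icc 0 t) := by
    intro k
    apply hIntBd _ ((1+t)^k * (C₂*B0)^n)
    · exact (hwa k).mul (hu.aestronglyMeasurable.pow _)
    · intro s hs
      have h1s : (0:ℝ) ≤ 1 + s := by linarith [hs.1]
      have hv := hu0 s hs.1
      rw [abs_of_nonneg (by positivity)]
      have hu2b : u s ^ 2 ≤ C₂ * B0 := le_trans (hu2le s hs.1)
        (mul_le_mul_of_nonneg_left (hBM s hs) hC₂.le)
      have : u s ^ (2*n) = (u s ^ 2)^n := by rw [← pow_mul]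
      rw [this]
      gcongr
      all_goals first
        | exact hs.2
        | exact hu2b
        | positivity
  have hintDn : ∀ k : ℕ, IntegrableOn (fun s => (1+s)^k * D s ^ n)
      (Set.Icc 0 t) := by
    intro k
    apply hIntBd _ ((1+t)^k * (C₂*B0)^n)
    · exact (hwa k).mul (hD.aestronglyMeasurable.pow _)
    · intro s hs
      have h1s : (0:ℝ) ≤ 1 + s := by linarith [hs.1]
      have hd := hD0 s hs.1
      rw [abs_of_nonneg (by positivity)]
      have hDb : D s ≤ C₂ * B0 := le_trans (hDle s hs.1)
        (mul_le_mul_of_nonneg_left (hBM s hs) hC₂.le)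
      gcongr
      all_goals first
        | exact hs.2
        | exact hDb
        | positivity
  -- the weighted energy functional and its derivative
  set F : ℝ → ℝ := fun s => (1+s)^l * M s ^ n with hFdef
  set F' : ℝ → ℝ := fun s => (l:ℝ)*(1+s)^(l-1) * M s ^ n
      + (1+s)^l * ((n:ℝ) * M s ^ (n-1) * derivWithin M (Set.Ici 0) s) with hF'def
  have hkey0 : ∀ x ∈ Set.Ici (0:ℝ), HasDerivWithinAt M (derivWithin M (Set.Ici 0) x)
      (Set.Ici 0) x := fun x hx =>
    ((hM.differentiableOn (by norm_num)) x hx).hasDerivWithinAt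
  have hderivF : ∀ x ∈ Set.Ioo (0:ℝ) t, HasDerivWithinAt F (F' x) (Set.Ioi x) x := by
    intro x hx
    have hMx : HasDerivWithinAt M (derivWithin M (Set.Ici 0) x) (Set.Ioi x) x :=
      (hkey0 x (le_of_lt hx.1)).mono (fun y hy => le_trans hx.1.le (le_of_lt hy))
    have h1 : HasDerivWithinAt (fun s : ℝ => 1+s) 1 (Set.Ioi x) x := by
      simpa using (hasDerivWithinAt_id x (Set.Ioi x)).const_add 1
    have h2 := h1.pow l
    have h3 := hMx.pow n
    have h4 : HasDerivWithinAt F ((l:ℝ) * (1 + x) ^ (l - 1) * 1 * M x ^ n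
        + (1 + x) ^ l * ((n:ℝ) * M x ^ (n - 1) * derivWithin M (Set.Ici 0) x)) (Set.Ioi x) x :=
      h2.mul h3
    convert h4 using 1
    simp only [hF'def]
    ring
  have hFc : ContinuousOn F (Set.Icc 0 t) :=
    (((continuous_const.add continuous_id).pow l).continuousOn).mul (hMcc.pow n)
  have hF'c : ContinuousOn F' (Set.Icc 0 t) := by
    apply ContinuousOn.add
    · exact (((continuous_const.mul ((continuous_const.add continuous_id).pow
        (l-1)))).continuousOn).mul (hMcc.pow n)
    · exact (((continuous_const.add continuous_id).pow l).continuousOn).mul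
        ((continuousOn_const.mul (hMcc.pow (n-1))).mul hM'cc)
  have hF'int : IntervalIntegrable F' volume 0 t := by
    apply ContinuousOn.intervalIntegrable
    rwa [Set.uIcc_of_le ht]
  have hFTC : ∫ s in Set.Icc (0:ℝ) t, F' s = F t - F 0 := by
    rw [MeasureTheory.integral_Icc_eq_integral_Ioc, ← intervalIntegral.integral_of_le ht]
    exact intervalIntegral.integral_eq_sub_of_hasDeriv_right_of_le ht hFc hderivF hF'int
  have hintF' : IntegrableOn F' (Set.Icc 0 t) :=
    (intervalIntegrable_iff_integrableOn_Icc_of_le ht).1 hF'int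
  -- pointwise differential inequality
  have hPt : ∀ s ∈ Set.Icc (0:ℝ) t,
      F' s + (n:ℝ) * ((1+s)^l * M s ^ (n-1) * D s) ≤
        2*(l:ℝ)*C₂ * ((1+s)^(l-1) * M s ^ (n-1) * D s)
        + 2*(l:ℝ)*C₂*(2*C₂)^(n-1) * ((1+s)^(l-1) * u s ^ (2*n))
        + C*δ*(n:ℝ) * ((1+s)^l * M s ^ (n-1) * D s)
        + 2*C*δ*(n:ℝ)*(2*C₂)^(n-1) * ((1+s)^l * u s ^ (2*n)) := by
    intro s hs
    have hs0 := hs.1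
    have hm := hM0 s hs0
    have hd := hD0 s hs0
    have hv := hu0 s hs0
    have h1s : (0:ℝ) ≤ 1+s := by linarith
    have hMs' := hi s hs0
    have hiiu := (hii s hs0).2
    have e2 : M s ^ (n-1) * (u s^2) ≤ M s ^ (n-1) * D s + 2*(2*C₂)^(n-1) * (u s^2)^n :=
      aux_key C₂ hC₂ n hn hm hd (sq_nonneg _) hiiu
    have e3 : M s ^ n ≤ C₂ * (M s ^(n-1) * (u s^2) + M s ^(n-1) * D s) := by
      calc M s ^ n = M s ^(n-1) * M s := by rw [← pow_succ, Nat.sub_add_cancel hn]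
      _ ≤ M s ^(n-1) * (C₂*(u s^2 + D s)) := mul_le_mul_of_nonneg_left hiiu (by positivity)
      _ = C₂ * (M s ^(n-1)*(u s^2) + M s ^(n-1)*D s) := by ring
    have e4 : M s ^ n ≤ C₂ * (2*(M s ^(n-1)*D s) + 2*(2*C₂)^(n-1)*(u s^2)^n) := by
      linarith [e3, mul_le_mul_of_nonneg_left e2 hC₂.le]
    have t1 : (n:ℝ)*(1+s)^l * (M s ^(n-1) * (derivWithin M (Set.Ici 0) s + D s)) ≤
        (n:ℝ)*(1+s)^l * (C*δ*(M s ^(n-1)*(u s^2))) := by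
      apply mul_le_mul_of_nonneg_left _ (by positivity)
      calc M s ^(n-1) * (derivWithin M (Set.Ici 0) s + D s)
          ≤ M s ^(n-1) * (C*δ*u s^2) := mul_le_mul_of_nonneg_left hMs' (by positivity)
      _ = C*δ*(M s ^(n-1)*(u s^2)) := by ring
    have t1' : (n:ℝ)*(1+s)^l*(C*δ*(M s ^(n-1)*(u s^2))) ≤
        (n:ℝ)*(1+s)^l*(C*δ*(M s ^(n-1)*D s + 2*(2*C₂)^(n-1)*(u s^2)^n)) := by
      apply mul_le_mul_of_nonneg_left _ (by positivity)
      exact mul_le_mul_of_nonneg_left e2 hCδ0.le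
    have t2 : (l:ℝ)*(1+s)^(l-1) * M s ^ n ≤
        (l:ℝ)*(1+s)^(l-1) * (C₂*(2*(M s ^(n-1)*D s) + 2*(2*C₂)^(n-1)*(u s^2)^n)) :=
      mul_le_mul_of_nonneg_left e4 (by positivity)
    have hpowmul : u s ^ (2*n) = (u s^2)^n := by rw [← pow_mul]
    simp only [hF'def]
    rw [hpowmul]
    linarith [t1, t1', t2]
  -- integrate the pointwise inequality
  have hIneqInt : (∫ s in Set.Icc (0:ℝ) t,
        (F' s + (n:ℝ)*((1+s)^l * M s ^ (n-1) * D s)))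
      ≤ ∫ s in Set.Icc (0:ℝ) t,
        (2*(l:ℝ)*C₂ * ((1+s)^(l-1) * M s ^ (n-1) * D s)
        + 2*(l:ℝ)*C₂*(2*C₂)^(n-1) * ((1+s)^(l-1) * u s ^ (2*n))
        + C*δ*(n:ℝ) * ((1+s)^l * M s ^ (n-1) * D s)
        + 2*C*δ*(n:ℝ)*(2*C₂)^(n-1) * ((1+s)^l * u s ^ (2*n))) := by
    apply setIntegral_mono_on _ _ measurableSet_Icc hPt
    · exact hintF'.add ((hintMD l).const_mul _)
    · exact ((((hintMD (l-1)).const_mul _).add ((hintU (l-1)).const_mul _)).add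
        ((hintMD l).const_mul _)).add ((hintU l).const_mul _)
  have hq1 : IntegrableOn (fun s => 2*(l:ℝ)*C₂ * ((1+s)^(l-1) * M s ^ (n-1) * D s)
      + 2*(l:ℝ)*C₂*(2*C₂)^(n-1) * ((1+s)^(l-1) * u s ^ (2*n))) (Set.Icc 0 t) :=
    ((hintMD (l-1)).const_mul _).add ((hintU (l-1)).const_mul _)
  have hq2 : IntegrableOn (fun s => 2*(l:ℝ)*C₂ * ((1+s)^(l-1) * M s ^ (n-1) * D s)
      + 2*(l:ℝ)*C₂*(2*C₂)^(n-1) * ((1+s)^(l-1) * u s ^ (2*n))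
      + C*δ*(n:ℝ) * ((1+s)^l * M s ^ (n-1) * D s)) (Set.Icc 0 t) :=
    hq1.add ((hintMD l).const_mul _)
  rw [integral_add hintF' ((hintMD l).const_mul _),
      integral_add hq2 ((hintU l).const_mul _),
      integral_add hq1 ((hintMD l).const_mul _),
      integral_add ((hintMD (l-1)).const_mul _) ((hintU (l-1)).const_mul _),
      integral_const_mul, integral_const_mul, integral_const_mul, integral_const_mul,
      integral_const_mul, hFTC] at hIneqInt
  -- integral positivity and comparison facts
  have hI0nn : 0 ≤ ∫ s in Set.Icc (0:ℝ) t, (1+s)^l * M s ^ (n-1) * D s :=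
    setIntegral_nonneg measurableSet_Icc (fun s hs => mul_nonneg (mul_nonneg
      (pow_nonneg (by linarith [hs.1]) l) (pow_nonneg (hM0 s hs.1) _)) (hD0 s hs.1))
  have hI1nn : 0 ≤ ∫ s in Set.Icc (0:ℝ) t, (1+s)^(l-1) * M s ^ (n-1) * D s :=
    setIntegral_nonneg measurableSet_Icc (fun s hs => mul_nonneg (mul_nonneg
      (pow_nonneg (by linarith [hs.1]) _) (pow_nonneg (hM0 s hs.1) _)) (hD0 s hs.1))
  have hVle : ∀ k : ℕ, (∫ s in Set.Icc (0:ℝ) t, (1+s)^k * D s ^ n) ≤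
      C₂^(n-1) * ∫ s in Set.Icc (0:ℝ) t, (1+s)^k * M s ^ (n-1) * D s := by
    intro k
    rw [← integral_const_mul]
    apply setIntegral_mono_on (hintDn k) ((hintMD k).const_mul _) measurableSet_Icc
    intro s hs
    have h := aux_Dn C₂ hC₂ n hn (hM0 s hs.1) (hD0 s hs.1) (hDle s hs.1)
    have h1s : (0:ℝ) ≤ 1+s := by linarith [hs.1]
    calc (1+s)^k * D s ^ n ≤ (1+s)^k * (C₂^(n-1) * (M s ^(n-1) * D s)) :=
        mul_le_mul_of_nonneg_left h (by positivity)
    _ = C₂^(n-1) * ((1+s)^k * M s ^ (n-1) * D s) := by ring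
  have hU0b := hiii n hn l hl t ht
  simp only [Real.rpow_natCast] at hU0b
  have hlm1 : ((l-1 : ℕ) : ℝ) ≤ 2 * (n:ℝ) * σ - 2 := by
    have : ((l-1:ℕ):ℝ) ≤ (l:ℝ) := by exact_mod_cast Nat.sub_le l 1
    linarith [hl2σ]
  have hU1b := hiii n hn (l-1) hlm1 t ht
  simp only [Real.rpow_natCast] at hU1b
  -- abbreviations
  set c2 : ℝ := 2*(l:ℝ)*C₂*(2*C₂)^(n-1) with hc2def
  set c4 : ℝ := 2*C*δ*(n:ℝ)*(2*C₂)^(n-1) with hc4def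
  have hc2nn : 0 ≤ c2 := by rw [hc2def]; positivity
  have hc4nn : 0 ≤ c4 := by rw [hc4def]; positivity
  -- numeric coefficient estimates
  have h2n : (C*δ)^(2*n) = (C*δ)^2 * ((C*δ)^2)^(n-1) := by
    rw [← pow_mul, ← pow_add]
    congr 1
    omega
  have hmulpow : ((C*δ)^2)^(n-1) * ((2*C₂)^(n-1) * C₂^(n-1)) =
      ((C*δ)^2*(2*C₂^2))^(n-1) := by
    rw [← mul_pow, ← mul_pow]
    congr 1
    ring
  have hCδ2 : (C*δ)^2 ≤ 1/16 := by
    have h := pow_le_pow_left₀ hCδ0.le hCδ4 2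
    norm_num at h
    linarith [h]
  have hγ1 : ((C*δ)^2*(2*C₂^2))^(n-1) ≤ 1 :=
    pow_le_one₀ (by positivity) (by linarith)
  have hgeo : ((C*δ)^2*(2*C₂^2))^(n-1) ≤ (1/8:ℝ)^(n-1) :=
    pow_le_pow_left₀ (by positivity) (by linarith) _
  have hc4b : c4 * ((C*δ)^(2*n) * C₂^(n-1)) ≤ (n:ℝ)/4 := by
    have heq : c4 * ((C*δ)^(2*n) * C₂^(n-1)) =
        2*(C*δ)*(C*δ)^2*(n:ℝ) * (((C*δ)^2*(2*C₂^2))^(n-1)) := by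
      rw [hc4def, h2n, ← hmulpow]; ring
    rw [heq]
    calc 2*(C*δ)*(C*δ)^2*(n:ℝ) * (((C*δ)^2*(2*C₂^2))^(n-1))
        ≤ 2*(1/4)*(1/16)*(n:ℝ) * 1 := by
          gcongr
          all_goals first | exact hCδ4 | exact hCδ2 | exact hγ1 | positivity
    _ ≤ (n:ℝ)/4 := by linarith [hn0]
  have hc2b : c2 * ((C*δ)^(2*n) * C₂^(n-1)) ≤ C₂ := by
    have heq : c2 * ((C*δ)^(2*n) * C₂^(n-1)) =
        2*(l:ℝ)*C₂*(C*δ)^2 * (((C*δ)^2*(2*C₂^2))^(n-1)) := by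
      rw [hc2def, h2n, ← hmulpow]; ring
    rw [heq]
    calc 2*(l:ℝ)*C₂*(C*δ)^2 * (((C*δ)^2*(2*C₂^2))^(n-1))
        ≤ 2*(5/2*(n:ℝ))*C₂*(1/16) * ((1/8:ℝ)^(n-1)) := by
          gcongr
          all_goals first | exact hl5 | exact hCδ2 | exact hgeo | positivity
    _ = (5/16)*C₂*((n:ℝ)*(1/8:ℝ)^(n-1)) := by ring
    _ ≤ (5/16)*C₂*2 := mul_le_mul_of_nonneg_left (aux_n_geo n hn) (by positivity)
    _ ≤ C₂ := by linarith [hC₂.le]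
  have hc3b : C*δ*(n:ℝ) ≤ (n:ℝ)/4 := by
    linarith [mul_le_mul_of_nonneg_right hCδ4 hn0]
  -- E₀ coefficient estimate
  have h7B : (2*C₂)^(n-1) ≤ B^(n-1) := pow_le_pow_left₀ (by positivity) h6B _
  have hc2E : c2 ≤ 5*(n:ℝ)*C₂*(2*C₂)^(n-1) := by
    rw [hc2def]
    apply mul_le_mul_of_nonneg_right _ (by positivity)
    linarith [mul_le_mul_of_nonneg_right hl5 hC₂.le]
  have hc4E : c4 ≤ (n:ℝ)*(2*C₂)^(n-1) := by
    rw [hc4def]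
    apply mul_le_mul_of_nonneg_right _ (by positivity)
    linarith [mul_le_mul_of_nonneg_right hCδ4 hn0]
  have hcE : c2 + c4 ≤ (4*B)^n := by
    have h9 : (n:ℝ)*((5*C₂+1)*(2*C₂)^(n-1)) ≤ 4^n*(B*B^(n-1)) := by
      apply mul_le_mul (aux_n_le n) _ (by positivity) (by positivity)
      exact mul_le_mul h5B h7B (by positivity) (by linarith [hB1])
    have h10 : (4:ℝ)^n*((B:ℝ)*B^(n-1)) = 4^n * B^n := by
      rw [← pow_succ', Nat.sub_add_cancel hn]
    have h11 : (4:ℝ)^n * B^n = (4*B)^n := (mul_pow 4 B n).symm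
    linarith [hc2E, hc4E, h9, h10, h11]
  have hcE2 : ((4:ℝ)*B)^n ≤ (4*B)^(2*n) :=
    pow_le_pow_right₀ (by linarith [hB1]) (by omega)
  have hEpow : (8*B*C*E₀)^(2*n) = 2^(2*n) * ((4*B)^(2*n) * (C*E₀)^(2*n)) := by
    rw [← mul_pow, ← mul_pow]
    congr 1
    ring
  have hE2n : (2:ℝ) ≤ 2^(2*n) := by
    calc (2:ℝ) = 2^1 := (pow_one 2).symm
    _ ≤ 2^(2*n) := pow_le_pow_right₀ (by norm_num) (by omega)
  have hEfinal : 2*((c2 + c4) * (C*E₀)^(2*n)) ≤ (8*B*C*E₀)^(2*n) := by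
    rw [hEpow]
    apply mul_le_mul hE2n (mul_le_mul_of_nonneg_right (le_trans hcE hcE2) (by positivity))
      (mul_nonneg (by linarith [hc2nn, hc4nn]) (by positivity)) (by positivity)
  -- combine the integral estimates
  have B1 : c4 * (∫ s in Set.Icc (0:ℝ) t, (1+s)^l * u s ^ (2*n)) ≤
      c4 * ((C*E₀)^(2*n) + (C*δ)^(2*n) * ∫ s in Set.Icc (0:ℝ) t, (1+s)^l * D s ^ n) :=
    mul_le_mul_of_nonneg_left hU0b hc4nn
  have B2 : (C*δ)^(2*n) * (∫ s in Set.Icc (0:ℝ) t, (1+s)^l * D s ^ n) ≤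
      (C*δ)^(2*n) * (C₂^(n-1) * ∫ s in Set.Icc (0:ℝ) t, (1+s)^l * M s ^ (n-1) * D s) :=
    mul_le_mul_of_nonneg_left (hVle l) (by positivity)
  have B2' : c4 * ((C*δ)^(2*n) * ∫ s in Set.Icc (0:ℝ) t, (1+s)^l * D s ^ n) ≤
      c4 * ((C*δ)^(2*n) * (C₂^(n-1) * ∫ s in Set.Icc (0:ℝ) t, (1+s)^l * M s ^ (n-1) * D s)) :=
    mul_le_mul_of_nonneg_left B2 hc4nn
  have B4 : c4 * ((C*δ)^(2*n) * C₂^(n-1)) *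
      (∫ s in Set.Icc (0:ℝ) t, (1+s)^l * M s ^ (n-1) * D s) ≤
      ((n:ℝ)/4) * ∫ s in Set.Icc (0:ℝ) t, (1+s)^l * M s ^ (n-1) * D s :=
    mul_le_mul_of_nonneg_right hc4b hI0nn
  have B5 : c2 * (∫ s in Set.Icc (0:ℝ) t, (1+s)^(l-1) * u s ^ (2*n)) ≤
      c2 * ((C*E₀)^(2*n) + (C*δ)^(2*n) * ∫ s in Set.Icc (0:ℝ) t, (1+s)^(l-1) * D s ^ n) :=
    mul_le_mul_of_nonneg_left hU1b hc2nn
  have B6 : (C*δ)^(2*n) * (∫ s in Set.Icc (0:ℝ) t, (1+s)^(l-1) * D s ^ n) ≤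
      (C*δ)^(2*n) * (C₂^(n-1) * ∫ s in Set.Icc (0:ℝ) t, (1+s)^(l-1) * M s ^ (n-1) * D s) :=
    mul_le_mul_of_nonneg_left (hVle (l-1)) (by positivity)
  have B6' : c2 * ((C*δ)^(2*n) * ∫ s in Set.Icc (0:ℝ) t, (1+s)^(l-1) * D s ^ n) ≤
      c2 * ((C*δ)^(2*n) * (C₂^(n-1) * ∫ s in Set.Icc (0:ℝ) t, (1+s)^(l-1) * M s ^ (n-1) * D s)) :=
    mul_le_mul_of_nonneg_left B6 hc2nn
  have B8 : C*δ*(n:ℝ) * (∫ s in Set.Icc (0:ℝ) t, (1+s)^l * M s ^ (n-1) * D s) ≤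
      ((n:ℝ)/4) * ∫ s in Set.Icc (0:ℝ) t, (1+s)^l * M s ^ (n-1) * D s :=
    mul_le_mul_of_nonneg_right hc3b hI0nn
  have hS : F t + ((n:ℝ)/2) * (∫ s in Set.Icc (0:ℝ) t, (1+s)^l * M s ^ (n-1) * D s) ≤
      F 0 + 2*(l:ℝ)*C₂ * (∫ s in Set.Icc (0:ℝ) t, (1+s)^(l-1) * M s ^ (n-1) * D s)
      + (c2*((C*δ)^(2*n)*C₂^(n-1))) *
          (∫ s in Set.Icc (0:ℝ) t, (1+s)^(l-1) * M s ^ (n-1) * D s)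
      + (c2+c4) * (C*E₀)^(2*n) := by
    linarith [hIneqInt, B1, B2', B4, B5, B6', B8]
  -- final assembly
  have hFt : F t = (1+t)^l * M t ^ n := rfl
  have hF0 : F 0 = M 0 ^ n := by simp [hFdef]
  have hFtnn : 0 ≤ F t := by
    rw [hFt]
    exact mul_nonneg (pow_nonneg (by linarith) l) (pow_nonneg (hM0 t ht) n)
  simp only [Real.rpow_natCast]
  rcases Nat.eq_zero_or_pos l with hl0 | hl1
  · -- case l = 0
    have hlc : ((l:ℕ):ℝ) = 0 := by rw [hl0]; norm_num
    have hz1 : 2*(l:ℝ)*C₂ *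
        (∫ s in Set.Icc (0:ℝ) t, (1+s)^(l-1) * M s ^ (n-1) * D s) = 0 := by
      rw [hlc]; ring
    have hz2 : (c2*((C*δ)^(2*n)*C₂^(n-1))) *
        (∫ s in Set.Icc (0:ℝ) t, (1+s)^(l-1) * M s ^ (n-1) * D s) = 0 := by
      rw [hc2def, hlc]; ring
    have hIneg : 0 ≤ ∫ s in Set.Icc (0:ℝ) t, (1+s)^((l:ℝ)-1) * M s ^ (n-1) * D s :=
      setIntegral_nonneg measurableSet_Icc (fun s hs => mul_nonneg (mul_nonneg
        (Real.rpow_nonneg (by linarith [hs.1]) _) (pow_nonneg (hM0 s hs.1) _)) (hD0 s hs.1))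
    have h8 : (0:ℝ) ≤ 8*C₂*(n:ℝ)*σ :=
      mul_nonneg (mul_nonneg (by positivity) hn0) (by linarith)
    have hterm : 0 ≤ 8*C₂*(n:ℝ)*σ *
        ∫ s in Set.Icc (0:ℝ) t, (1+s)^((l:ℝ)-1) * M s ^ (n-1) * D s :=
      mul_nonneg h8 hIneg
    have hc2E0 : 0 ≤ (c2+c4)*(C*E₀)^(2*n) :=
      mul_nonneg (by linarith) (by positivity)
    linarith [hS, hz1, hz2, hterm, hEfinal, hFtnn, hF0, hFt, hc2E0]
  · -- case 1 ≤ l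
    have hlcast : ((l:ℝ) - 1) = ((l-1:ℕ):ℝ) := by
      have := Nat.cast_sub (R := ℝ) hl1
      simpa using this.symm
    simp only [hlcast, Real.rpow_natCast]
    have hI1a : (c2*((C*δ)^(2*n)*C₂^(n-1))) *
        (∫ s in Set.Icc (0:ℝ) t, (1+s)^(l-1) * M s ^ (n-1) * D s) ≤
        C₂ * ∫ s in Set.Icc (0:ℝ) t, (1+s)^(l-1) * M s ^ (n-1) * D s :=
      mul_le_mul_of_nonneg_right hc2b hI1nn
    have hco : 4*(l:ℝ)*C₂ + 2*C₂ ≤ 8*C₂*(n:ℝ)*σ := by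
      linarith [mul_le_mul_of_nonneg_left hl2σ (show (0:ℝ) ≤ 4*C₂ by positivity)]
    have hI1b : (4*(l:ℝ)*C₂ + 2*C₂) *
        (∫ s in Set.Icc (0:ℝ) t, (1+s)^(l-1) * M s ^ (n-1) * D s) ≤
        (8*C₂*(n:ℝ)*σ) * ∫ s in Set.Icc (0:ℝ) t, (1+s)^(l-1) * M s ^ (n-1) * D s :=
      mul_le_mul_of_nonneg_right hco hI1nn
    linarith [hS, hI1a, hI1b, hEfinal, hFtnn, hF0, hFt]
end
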